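/- Let q = q_0^m where q_0 is a prime power, m is even, and d is a positive integer dividing q_0 + 1. Let ℓ > 0 be an integer and put d_0 := d/gcd(d, ℓ−1). Then for every ζ ∈ μ_d with ζ ≠ 1 (note μ_d ⊆ F_q since d divides q−1), one has h_ℓ(ζ)^{q_0} = h_ℓ(ζ)/ζ^{ℓ−1}, and consequently h_ℓ(ζ)^{d_0} lies in the subfield F_{q_0} of F_q of order q_0. -/

import Mathlib

open Polynomial

lemma aux_mem_subfield {F : Type*} [Field F] [Fintype F] {q0 : ℕ} (hq0 : 1 < q0)
    (K : Subfield F) (hK : Nat.card K = q0) {x : F} (hx : x ^ q0 = x) : x ∈ K := by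
  classical
  haveI : Fintype K := Fintype.ofFinite K
  have hcard : Fintype.card K = q0 := by rw [← Nat.card_eq_fintype_card, hK]
  set P : F[X] := X ^ q0 - X with hP
  have hdeg : P.natDegree = q0 := by
    have h1 : (X ^ q0 : F[X]).natDegree = q0 := natDegree_X_pow q0
    have := Polynomial.natDegree_sub_eq_left_of_natDegree_lt
      (p := (X ^ q0 : F[X])) (q := X) (by simp [h1, natDegree_X]; omega)
    simpa [h1] using this
  have hPne : P ≠ 0 := fun h => by simp [h] at hdeg; omega
  set T : Finset F := P.roots.toFinset with hT
  have hTcard : T.card ≤ q0 := by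
    calc T.card ≤ Multiset.card P.roots := Multiset.toFinset_card_le _
    _ ≤ P.natDegree := Polynomial.card_roots' P
    _ = q0 := hdeg
  set I : Finset F := Finset.univ.image (Subtype.val : K → F) with hI
  have hIcard : I.card = q0 := by
    rw [hI, Finset.card_image_of_injective _ Subtype.val_injective,
      Finset.card_univ, hcard]
  have hIT : I ⊆ T := by
    intro a ha
    rw [hI, Finset.mem_image] at ha
    obtain ⟨b, -, rfl⟩ := ha
    have hb : (b : F) ^ q0 = (b : F) := by
      have : b ^ (Fintype.card K) = b := FiniteField.pow_card b
      rw [hcard] at this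
      exact_mod_cast congrArg (Subtype.val) this
    rw [hT, Multiset.mem_toFinset, Polynomial.mem_roots hPne]
    simp [hP, IsRoot, hb]
  have hIeqT : I = T := Finset.eq_of_subset_of_card_le hIT (hIcard ▸ hTcard)
  have hxT : x ∈ T := by
    rw [hT, Multiset.mem_toFinset, Polynomial.mem_roots hPne]
    simp [hP, IsRoot, hx]
  rw [← hIeqT, hI, Finset.mem_image] at hxT
  obtain ⟨b, -, rfl⟩ := hxT
  exact b.2

/-- Let q = q_0^m with q_0 a prime power, m even, and d > 0 dividing q_0 + 1. Let
ℓ > 0 and d_0 := d/gcd(d, ℓ−1). Then for every ζ ∈ μ_d with ζ ≠ 1 (μ_d ⊆ F_q since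
d ∣ q−1), one has h_ℓ(ζ)^{q_0} = h_ℓ(ζ)/ζ^{ℓ−1}, and h_ℓ(ζ)^{d_0} lies in the
subfield of F_q of order q_0. -/
theorem stmt_13 {F : Type*} [Field F] [Fintype F] {q q0 m d ℓ : ℕ}
    (hq : Fintype.card F = q) (hq0 : IsPrimePow q0) (hme : Even m) (hqm : q = q0 ^ m)
    (hd : 0 < d) (hdq : d ∣ q0 + 1) (hl : 0 < ℓ)
    (d0 : ℕ) (hd0 : d0 = d / Nat.gcd d (ℓ - 1))
    (K : Subfield F) (hK : Nat.card K = q0) :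
    ∀ ζ : F, ζ ^ d = 1 → ζ ≠ 1 →
      ((∑ i ∈ Finset.range ℓ, X ^ i : F[X]).eval ζ) ^ q0 =
        ((∑ i ∈ Finset.range ℓ, X ^ i : F[X]).eval ζ) / ζ ^ (ℓ - 1) ∧
      ((∑ i ∈ Finset.range ℓ, X ^ i : F[X]).eval ζ) ^ d0 ∈ K := by
  classical
  obtain ⟨p, n, hp, hn, hq0eq⟩ := hq0
  have hpn : p.Prime := hp.nat_prime
  have hq0gt : 1 < q0 := by
    rw [← hq0eq]; exact Nat.one_lt_pow hn.ne' hpn.one_lt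
  -- characteristic
  have hm0 : 0 < m := by
    rcases Nat.eq_zero_or_pos m with h | h
    · exfalso
      have := Fintype.one_lt_card (α := F)
      rw [hq, hqm, h, pow_zero] at this
      omega
    · exact h
  have hq00 : (q0 : F) = 0 := by
    have h0 : ((Fintype.card F : ℕ) : F) = 0 := FiniteField.cast_card_eq_zero F
    rw [hq, hqm] at h0
    push_cast at h0
    exact pow_eq_zero_iff hm0.ne' |>.mp h0
  have hchar : ringChar F = p := by
    have h1 : ringChar F ∣ q0 := (ringChar.spec F q0).mp hq00
    rw [← hq0eq] at h1
    have h2 := (Nat.Prime.prime (CharP.char_is_prime F (ringChar F))).dvd_of_dvd_pow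
      (by exact_mod_cast h1)
    exact (Nat.prime_dvd_prime_iff_eq (CharP.char_is_prime F (ringChar F)) hpn).mp h2
  haveI : Fact p.Prime := ⟨hpn⟩
  haveI hcp : CharP F p := hchar ▸ ringChar.charP F
  have hfrob : ∀ (s : Finset ℕ) (f : ℕ → F),
      (∑ i ∈ s, f i) ^ q0 = ∑ i ∈ s, (f i) ^ q0 := by
    intro s f
    have h := map_sum (iterateFrobenius F p n) f s
    simp only [iterateFrobenius_def] at h
    rwa [hq0eq] at h
  intro ζ hζd hζ1
  have hζ0 : ζ ≠ 0 := by
    intro h; rw [h, zero_pow hd.ne'] at hζd; exact zero_ne_one hζd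
  have hζq0 : ζ ^ q0 = ζ⁻¹ := by
    obtain ⟨k, hk⟩ := hdq
    have h1 : ζ ^ (q0 + 1) = 1 := by
      rw [hk, pow_mul, hζd, one_pow]
    have : ζ ^ q0 * ζ = 1 := by rw [← pow_succ]; exact h1
    exact eq_inv_of_mul_eq_one_right (by rw [mul_comm]; exact this)
  have heval : (∑ i ∈ Finset.range ℓ, X ^ i : F[X]).eval ζ
      = ∑ i ∈ Finset.range ℓ, ζ ^ i := by
    simp [eval_finset_sum]
  set S : F := ∑ i ∈ Finset.range ℓ, ζ ^ i with hS
  have h1 : S ^ q0 = ∑ i ∈ Finset.range ℓ, (ζ⁻¹) ^ i := by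
    rw [hS, hfrob]
    refine Finset.sum_congr rfl fun i _ => ?_
    rw [← pow_mul, mul_comm, pow_mul, hζq0]
  have h2 : S / ζ ^ (ℓ - 1) = ∑ i ∈ Finset.range ℓ, (ζ⁻¹) ^ i := by
    rw [div_eq_iff (pow_ne_zero _ hζ0), Finset.sum_mul, hS]
    rw [← Finset.sum_range_reflect (fun i => (ζ⁻¹) ^ i * ζ ^ (ℓ - 1)) ℓ]
    refine Finset.sum_congr rfl fun i hi => ?_
    have hi' : i < ℓ := Finset.mem_range.mp hi
    have hpow : ζ ^ (ℓ - 1) = ζ ^ (ℓ - 1 - i) * ζ ^ i := by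
      rw [← pow_add]; congr 1; omega
    rw [inv_pow, hpow, inv_mul_cancel_left₀ (pow_ne_zero _ hζ0)]
  have key : S ^ q0 = S / ζ ^ (ℓ - 1) := by rw [h1, h2]
  have hζpow : ζ ^ ((ℓ - 1) * d0) = 1 := by
    have hdvd : d ∣ (ℓ - 1) * d0 := by
      rw [hd0, ← Nat.mul_div_assoc (ℓ - 1) (Nat.gcd_dvd_left d (ℓ - 1)),
        Nat.gcd_comm d (ℓ - 1)]
      exact Nat.dvd_lcm_right (ℓ - 1) d
    obtain ⟨k, hk⟩ := hdvd
    rw [hk, pow_mul, hζd, one_pow]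
  have hmem : S ^ d0 ∈ K := by
    refine aux_mem_subfield hq0gt K hK ?_
    have : (S ^ d0) ^ q0 = (S ^ q0) ^ d0 := by rw [← pow_mul, mul_comm, pow_mul]
    rw [this, key, div_pow, ← pow_mul, mul_comm (ℓ - 1) d0, mul_comm d0 (ℓ - 1),
      hζpow, div_one]
  rw [heval]
  exact ⟨key, hmem⟩
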